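/- Let A : I → B(H) be strongly continuous and t₀ ∈ I, V₀ ∈ B(H). Then the initial value problem V'(t) = A(t)V(t), V(t₀) = V₀, has a unique strong solution V : I → B(H), and this solution is norm-continuous. -/

import Mathlib

set_option linter.unusedSectionVars false

open Set Function intervalIntegral MeasureTheory Filter Topology
open scoped Nat

section Aux

variable {H : Type*} [NormedAddCommGroup H] [InnerProductSpace ℂ H] [CompleteSpace H]

/-- If `A` is strongly continuous and uniformly bounded on `S`, and `g` is continuous on `S`,
then `s ↦ A s (g s)` is continuous on `S`. -/
lemma continuousOn_apply_of_strong {A : ℝ → H →L[ℂ] H} {S : Set ℝ} {M : ℝ}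
    (hA : ∀ ψ : H, ContinuousOn (fun t => A t ψ) S)
    (hM : ∀ s ∈ S, ‖A s‖ ≤ M)
    {g : ℝ → H} (hg : ContinuousOn g S) :
    ContinuousOn (fun s => A s (g s)) S := by
  intro t ht
  rw [ContinuousWithinAt, tendsto_iff_norm_sub_tendsto_zero]
  have hbd : ∀ᶠ s in 𝓝[S] t, ‖A s (g s) - A t (g t)‖ ≤
      M * ‖g s - g t‖ + ‖A s (g t) - A t (g t)‖ := by
    filter_upwards [self_mem_nhdsWithin] with s hs
    calc ‖A s (g s) - A t (g t)‖
        = ‖A s (g s - g t) + (A s (g t) - A t (g t))‖ := by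
          rw [map_sub]; congr 1; abel
      _ ≤ ‖A s (g s - g t)‖ + ‖A s (g t) - A t (g t)‖ := norm_add_le _ _
      _ ≤ M * ‖g s - g t‖ + ‖A s (g t) - A t (g t)‖ := by
          gcongr
          exact ((A s).le_opNorm _).trans (mul_le_mul_of_nonneg_right (hM s hs) (norm_nonneg _))
  have h1 : Tendsto (fun s => M * ‖g s - g t‖ + ‖A s (g t) - A t (g t)‖) (𝓝[S] t) (𝓝 0) := by
    have hg' : Tendsto (fun s => ‖g s - g t‖) (𝓝[S] t) (𝓝 0) := by
      rw [← tendsto_iff_norm_sub_tendsto_zero]; exact hg t ht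
    have hA' : Tendsto (fun s => ‖A s (g t) - A t (g t)‖) (𝓝[S] t) (𝓝 0) := by
      rw [← tendsto_iff_norm_sub_tendsto_zero]; exact hA (g t) t ht
    simpa using (hg'.const_mul M).add hA'
  exact squeeze_zero' (by filter_upwards with s using norm_nonneg _) hbd h1

lemma exists_opNorm_bound {A : ℝ → H →L[ℂ] H} {a b : ℝ}
    (hA : ∀ ψ : H, ContinuousOn (fun t => A t ψ) (Icc a b)) :
    ∃ M : ℝ, 0 ≤ M ∧ ∀ s ∈ Icc a b, ‖A s‖ ≤ M := by
  rcases eq_empty_or_nonempty (Icc a b) with he | hne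
  · exact ⟨0, le_rfl, fun s hs => by simp [he] at hs⟩
  · have h : ∀ ψ : H, ∃ C, ∀ s : Icc a b, ‖A s ψ‖ ≤ C := by
      intro ψ
      obtain ⟨C, hC⟩ := isCompact_Icc.exists_bound_of_continuousOn (hA ψ)
      exact ⟨C, fun s => hC s s.2⟩
    obtain ⟨C', hC'⟩ := banach_steinhaus (g := fun s : Icc a b => A s) h
    exact ⟨max C' 0, le_max_right _ _, fun s hs => (hC' ⟨s, hs⟩).trans (le_max_left _ _)⟩

end Aux


section Core

variable {H : Type*} [NormedAddCommGroup H] [InnerProductSpace ℂ H] [CompleteSpace H]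

/-- Hypotheses for the compact-interval construction. -/
structure DysonHyp (A : ℝ → H →L[ℂ] H) (a b t₀ M : ℝ) : Prop where
  hab : a ≤ b
  ht₀ : t₀ ∈ Icc a b
  hM0 : 0 ≤ M
  hM : ∀ s ∈ Icc a b, ‖A s‖ ≤ M
  hA : ∀ ψ : H, ContinuousOn (fun t => A t ψ) (Icc a b)

namespace DysonHyp

variable {A : ℝ → H →L[ℂ] H} {a b t₀ M : ℝ} (h : DysonHyp A a b t₀ M)
variable (V₀ : H →L[ℂ] H)

/-- Projection of `ℝ` onto `Icc a b`. -/
noncomputable def pr (s : ℝ) : Icc a b := projIcc a b h.hab s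

lemma pr_of_mem {s : ℝ} (hs : s ∈ Icc a b) : (h.pr s : ℝ) = s := by
  simp [pr, projIcc_of_mem h.hab hs]

/-- The integrand of the Picard iteration, applied to a vector. -/
noncomputable def vComp (f : C(Icc a b, H →L[ℂ] H)) (ψ : H) (s : ℝ) : H :=
  A (h.pr s) (f (h.pr s) ψ)

lemma continuous_vComp (f : C(Icc a b, H →L[ℂ] H)) (ψ : H) : Continuous (h.vComp f ψ) := by
  have hg : Continuous fun s : ℝ => (f (h.pr s)) ψ :=
    (f.continuous.comp (continuous_projIcc (h := h.hab))).clm_apply continuous_const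
  have hco : ContinuousOn (fun s : ℝ => A s (f (h.pr s) ψ)) (Icc a b) :=
    continuousOn_apply_of_strong h.hA h.hM hg.continuousOn
  have : Continuous fun s : ℝ =>
      (fun u : ℝ => A u (f (h.pr u) ψ)) ((h.pr s : ℝ)) := by
    apply hco.comp_continuous
      (continuous_subtype_val.comp (continuous_projIcc (h := h.hab)))
    exact fun s => (h.pr s).2
  have hpp : ∀ s : ℝ, h.pr ((h.pr s : ℝ)) = h.pr s :=
    fun s => Subtype.ext (h.pr_of_mem (h.pr s).2)
  simp only [hpp] at this
  exact this

lemma intervalIntegrable_vComp (f : C(Icc a b, H →L[ℂ] H)) (ψ : H) (t₁ t₂ : ℝ) :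
    IntervalIntegrable (h.vComp f ψ) volume t₁ t₂ :=
  (h.continuous_vComp f ψ).intervalIntegrable t₁ t₂

lemma norm_vComp_le (f : C(Icc a b, H →L[ℂ] H)) (ψ : H) (s : ℝ) :
    ‖h.vComp f ψ s‖ ≤ M * (‖f‖ * ‖ψ‖) :=
  calc ‖A (h.pr s) (f (h.pr s) ψ)‖ ≤ ‖A (h.pr s)‖ * ‖f (h.pr s) ψ‖ :=
        (A _).le_opNorm _
    _ ≤ M * (‖f‖ * ‖ψ‖) := by
        apply mul_le_mul (h.hM _ (h.pr s).2) _ (norm_nonneg _) h.hM0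
        exact ((f _).le_opNorm ψ).trans
          (mul_le_mul_of_nonneg_right (f.norm_coe_le_norm _) (norm_nonneg _))

/-- One step of the Picard iteration, as an operator. -/
noncomputable def nextOp (f : C(Icc a b, H →L[ℂ] H)) (t : ℝ) : H →L[ℂ] H :=
  LinearMap.mkContinuous
    { toFun := fun ψ => V₀ ψ + ∫ s in t₀..t, h.vComp f ψ s
      map_add' := fun ψ χ => by
        have : ∀ s, h.vComp f (ψ + χ) s = h.vComp f ψ s + h.vComp f χ s := by
          intro s; simp [vComp]
        simp only [map_add, this,
          intervalIntegral.integral_add (h.intervalIntegrable_vComp f ψ t₀ t)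
            (h.intervalIntegrable_vComp f χ t₀ t)]
        abel
      map_smul' := fun c ψ => by
        have : ∀ s, h.vComp f (c • ψ) s = c • h.vComp f ψ s := by
          intro s; simp [vComp]
        simp only [this, intervalIntegral.integral_smul, RingHom.id_apply,
          ContinuousLinearMap.map_smul, smul_add] }
    (‖V₀‖ + M * ‖f‖ * |t - t₀|)
    (by
      intro ψ
      simp only [LinearMap.coe_mk, AddHom.coe_mk]
      calc ‖V₀ ψ + ∫ s in t₀..t, h.vComp f ψ s‖
          ≤ ‖V₀ ψ‖ + ‖∫ s in t₀..t, h.vComp f ψ s‖ := norm_add_le _ _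
        _ ≤ ‖V₀‖ * ‖ψ‖ + M * (‖f‖ * ‖ψ‖) * |t - t₀| := by
            gcongr
            · exact V₀.le_opNorm ψ
            · exact intervalIntegral.norm_integral_le_of_norm_le_const
                (fun s _ => h.norm_vComp_le f ψ s)
        _ = (‖V₀‖ + M * ‖f‖ * |t - t₀|) * ‖ψ‖ := by ring)

lemma nextOp_apply (f : C(Icc a b, H →L[ℂ] H)) (t : ℝ) (ψ : H) :
    h.nextOp V₀ f t ψ = V₀ ψ + ∫ s in t₀..t, h.vComp f ψ s := rfl

lemma norm_nextOp_sub_le (f : C(Icc a b, H →L[ℂ] H)) (t t' : ℝ) :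
    ‖h.nextOp V₀ f t - h.nextOp V₀ f t'‖ ≤ M * ‖f‖ * |t - t'| := by
  apply ContinuousLinearMap.opNorm_le_bound _
    (mul_nonneg (mul_nonneg h.hM0 (norm_nonneg _)) (abs_nonneg _))
  intro ψ
  have : (h.nextOp V₀ f t - h.nextOp V₀ f t') ψ = ∫ s in t'..t, h.vComp f ψ s := by
    simp only [ContinuousLinearMap.sub_apply, nextOp_apply]
    rw [add_sub_add_left_eq_sub,
      intervalIntegral.integral_interval_sub_left (h.intervalIntegrable_vComp f ψ t₀ t)
        (h.intervalIntegrable_vComp f ψ t₀ t')]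
  rw [this]
  calc ‖∫ s in t'..t, h.vComp f ψ s‖ ≤ M * (‖f‖ * ‖ψ‖) * |t - t'| :=
        intervalIntegral.norm_integral_le_of_norm_le_const (fun s _ => h.norm_vComp_le f ψ s)
    _ = M * ‖f‖ * |t - t'| * ‖ψ‖ := by ring

/-- One step of the Picard iteration, as a continuous map on `Icc a b`. -/
noncomputable def next (f : C(Icc a b, H →L[ℂ] H)) : C(Icc a b, H →L[ℂ] H) :=
  ⟨fun t => h.nextOp V₀ f t, by
    have : LipschitzWith (M * ‖f‖).toNNReal fun t : ℝ => h.nextOp V₀ f t := by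
      apply LipschitzWith.of_dist_le_mul
      intro t t'
      rw [Real.coe_toNNReal _ (mul_nonneg h.hM0 (norm_nonneg _)), dist_eq_norm, Real.dist_eq]
      exact h.norm_nextOp_sub_le V₀ f t t'
    exact this.continuous.comp continuous_subtype_val⟩

lemma next_apply (f : C(Icc a b, H →L[ℂ] H)) (t : Icc a b) :
    h.next V₀ f t = h.nextOp V₀ f t := rfl


lemma dist_next_apply_le {V₀ : H →L[ℂ] H} {f g : C(Icc a b, H →L[ℂ] H)} {n : ℕ} {d : ℝ}
    (hd : 0 ≤ d)
    (hfg : ∀ t : Icc a b, dist (f t) (g t) ≤ (M * |(t : ℝ) - t₀|) ^ n / n ! * d)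
    (t : Icc a b) :
    dist (h.next V₀ f t) (h.next V₀ g t) ≤ (M * |(t : ℝ) - t₀|) ^ (n + 1) / (n + 1)! * d := by
  rw [dist_eq_norm, next_apply, next_apply]
  have hbnd : (0:ℝ) ≤ (M * |(t : ℝ) - t₀|) ^ (n + 1) / (n + 1)! :=
    div_nonneg (pow_nonneg (mul_nonneg h.hM0 (abs_nonneg _)) _) (Nat.cast_nonneg _)
  apply ContinuousLinearMap.opNorm_le_bound _ (mul_nonneg hbnd hd)
  intro ψ
  have hsub : (h.nextOp V₀ f t - h.nextOp V₀ g t) ψ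
      = ∫ s in t₀..(t : ℝ), (h.vComp f ψ s - h.vComp g ψ s) := by
    simp only [ContinuousLinearMap.sub_apply, nextOp_apply, add_sub_add_left_eq_sub]
    rw [intervalIntegral.integral_sub (h.intervalIntegrable_vComp f ψ t₀ t)
      (h.intervalIntegrable_vComp g ψ t₀ t)]
  rw [hsub, intervalIntegral.norm_intervalIntegral_eq]
  calc ‖∫ s in Set.uIoc t₀ (t : ℝ), (h.vComp f ψ s - h.vComp g ψ s)‖
      ≤ ∫ s in Set.uIoc t₀ (t : ℝ), M * ((M * |s - t₀|) ^ n / n ! * d * ‖ψ‖) := by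
        refine norm_integral_le_of_norm_le (Continuous.integrableOn_uIoc (by fun_prop)) ?_
        refine (ae_restrict_mem measurableSet_Ioc).mono fun s hs => ?_
        have hsmem : s ∈ Icc a b := uIcc_subset_Icc h.ht₀ t.2 (Ioc_subset_Icc_self hs)
        have h1 : h.vComp f ψ s - h.vComp g ψ s = A (h.pr s) ((f (h.pr s) - g (h.pr s)) ψ) := by
          simp [vComp, ContinuousLinearMap.sub_apply]
        rw [h1]
        calc ‖A (h.pr s) ((f (h.pr s) - g (h.pr s)) ψ)‖
            ≤ M * (‖f (h.pr s) - g (h.pr s)‖ * ‖ψ‖) := by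
              refine ((A _).le_opNorm _).trans ?_
              exact mul_le_mul (h.hM _ (h.pr s).2) ((f _ - g _).le_opNorm ψ)
                (norm_nonneg _) h.hM0
          _ ≤ M * ((M * |s - t₀|) ^ n / n ! * d * ‖ψ‖) := by
              have h2 : ‖f (h.pr s) - g (h.pr s)‖ ≤ (M * |s - t₀|) ^ n / n ! * d := by
                have := hfg (h.pr s)
                rw [dist_eq_norm, h.pr_of_mem hsmem] at this
                exact this
              gcongr
              exact h.hM0
    _ = (M * |(t : ℝ) - t₀|) ^ (n + 1) / (n + 1)! * d * ‖ψ‖ := by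
        have hrw : (fun s : ℝ => M * ((M * |s - t₀|) ^ n / n ! * d * ‖ψ‖))
            = fun s : ℝ => (M * (M ^ n / n ! * d * ‖ψ‖)) * |s - t₀| ^ n := by
          funext s; rw [mul_pow]; ring
        rw [hrw, MeasureTheory.integral_const_mul, integral_pow_abs_sub_uIoc, mul_pow,
          Nat.factorial_succ, Nat.cast_mul, Nat.cast_add, Nat.cast_one]
        have hfac : (n ! : ℝ) ≠ 0 := Nat.cast_ne_zero.2 (Nat.factorial_ne_zero n)
        field_simp
        ring

lemma dist_iterate_next_apply_le (V₀ : H →L[ℂ] H) (f g : C(Icc a b, H →L[ℂ] H)) (n : ℕ)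
    (t : Icc a b) :
    dist ((h.next V₀)^[n] f t) ((h.next V₀)^[n] g t)
      ≤ (M * |(t : ℝ) - t₀|) ^ n / n ! * dist f g := by
  induction n generalizing t with
  | zero => simpa using ContinuousMap.dist_apply_le_dist t
  | succ n ihn =>
    rw [iterate_succ_apply', iterate_succ_apply']
    exact h.dist_next_apply_le dist_nonneg ihn t

include h in
lemma abs_sub_le_of_mem {t : ℝ} (ht : t ∈ Icc a b) : |t - t₀| ≤ b - a := by
  rw [abs_le]
  constructor <;> [linarith [ht.1, h.ht₀.2]; linarith [ht.2, h.ht₀.1]]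

lemma dist_iterate_next_le (V₀ : H →L[ℂ] H) (f g : C(Icc a b, H →L[ℂ] H)) (n : ℕ) :
    dist ((h.next V₀)^[n] f) ((h.next V₀)^[n] g)
      ≤ (M * (b - a)) ^ n / n ! * dist f g := by
  have hnn : (0:ℝ) ≤ (M * (b - a)) ^ n / n ! * dist f g :=
    mul_nonneg (div_nonneg (pow_nonneg (mul_nonneg h.hM0 (sub_nonneg.2 h.hab)) _)
      (Nat.cast_nonneg _)) dist_nonneg
  refine (ContinuousMap.dist_le hnn).2 fun t => ?_
  refine (h.dist_iterate_next_apply_le V₀ f g n t).trans ?_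
  have h1 : M * |(t:ℝ) - t₀| ≤ M * (b - a) :=
    mul_le_mul_of_nonneg_left (h.abs_sub_le_of_mem t.2) h.hM0
  gcongr
  exact mul_nonneg h.hM0 (abs_nonneg _)

include h in
/-- Existence of a strong solution on the compact interval `Icc a b`. -/
theorem exists_sol (V₀ : H →L[ℂ] H) :
    ∃ W : ℝ → H →L[ℂ] H, Continuous W ∧ W t₀ = V₀ ∧
      ∀ ψ : H, ∀ t ∈ Icc a b, HasDerivWithinAt (fun s => W s ψ) (A t (W t ψ)) (Icc a b) t := by
  haveI : Nonempty (Icc a b) := ⟨⟨t₀, h.ht₀⟩⟩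
  haveI : Nonempty C(Icc a b, H →L[ℂ] H) := ⟨⟨fun _ => 0, continuous_const⟩⟩
  obtain ⟨n, hn⟩ : ∃ n : ℕ, (M * (b - a)) ^ n / n ! < 1 :=
    ((FloorSemiring.tendsto_pow_div_factorial_atTop (M * (b - a))).eventually
      (gt_mem_nhds zero_lt_one)).exists
  have hnn : (0:ℝ) ≤ (M * (b - a)) ^ n / n ! :=
    div_nonneg (pow_nonneg (mul_nonneg h.hM0 (sub_nonneg.2 h.hab)) _) (Nat.cast_nonneg _)
  set K : NNReal := ((M * (b - a)) ^ n / n !).toNNReal with hK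
  have hK1 : K < 1 := by
    rw [hK, ← NNReal.coe_lt_coe, Real.coe_toNNReal _ hnn]
    simpa using hn
  have hC : ContractingWith K ((h.next V₀)^[n]) := by
    refine ⟨hK1, LipschitzWith.of_dist_le_mul fun f g => ?_⟩
    rw [hK, Real.coe_toNNReal _ hnn]
    exact h.dist_iterate_next_le V₀ f g n
  set W' : C(Icc a b, H →L[ℂ] H) := ContractingWith.fixedPoint ((h.next V₀)^[n]) hC with hW'
  have hfix : h.next V₀ W' = W' := hC.isFixedPt_fixedPoint_iterate
  have happly : ∀ s : ℝ, s ∈ Icc a b → W' (h.pr s) = h.nextOp V₀ W' s := by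
    intro s hs
    conv_lhs => rw [← hfix]
    rw [next_apply, h.pr_of_mem hs]
  refine ⟨fun s => W' (h.pr s), ?_, ?_, ?_⟩
  · exact W'.continuous.comp (continuous_projIcc (h := h.hab))
  · ext ψ
    show (W' (h.pr t₀)) ψ = V₀ ψ
    rw [happly t₀ h.ht₀, nextOp_apply, intervalIntegral.integral_same, add_zero]
  · intro ψ t ht
    haveI : Fact (t ∈ Icc a b) := ⟨ht⟩
    have hF : HasDerivWithinAt (fun s : ℝ => V₀ ψ + ∫ τ in t₀..s, h.vComp W' ψ τ)
        (h.vComp W' ψ t) (Icc a b) t :=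
      HasDerivWithinAt.const_add _
        (integral_hasDerivWithinAt_right (h.intervalIntegrable_vComp W' ψ t₀ t)
          ((h.continuous_vComp W' ψ).stronglyMeasurableAtFilter _ _)
          (h.continuous_vComp W' ψ).continuousWithinAt)
    have hval : h.vComp W' ψ t = A t (W' (h.pr t) ψ) := by
      simp only [vComp]
      rw [h.pr_of_mem ht]
    rw [← hval]
    refine hF.congr (fun s hs => ?_) ?_
    · show (W' (h.pr s)) ψ = _
      rw [happly s hs, nextOp_apply]
    · show (W' (h.pr t)) ψ = _
      rw [happly t ht, nextOp_apply]


include h in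
/-- Uniqueness of strong (vector-valued) solutions on the compact interval `Icc a b`. -/
lemma eqOn_of_sol {u w : ℝ → H}
    (hu : ∀ t ∈ Icc a b, HasDerivWithinAt u (A t (u t)) (Icc a b) t)
    (hw : ∀ t ∈ Icc a b, HasDerivWithinAt w (A t (w t)) (Icc a b) t)
    (h0 : u t₀ = w t₀) : EqOn u w (Icc a b) := by
  have hucont : ContinuousOn u (Icc a b) := fun s hs => (hu s hs).continuousWithinAt
  have hwcont : ContinuousOn w (Icc a b) := fun s hs => (hw s hs).continuousWithinAt
  set v : ℝ → H → H := fun s x => A (h.pr s) x with hv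
  have hlip : ∀ s : ℝ, LipschitzOnWith M.toNNReal (v s) univ := by
    intro s
    apply LipschitzWith.lipschitzOnWith
    refine (A (h.pr s)).lipschitz.weaken ?_
    rw [← NNReal.coe_le_coe, coe_nnnorm, Real.coe_toNNReal _ h.hM0]
    exact h.hM _ (h.pr s).2
  intro t' ht'
  rcases le_total t₀ t' with hle | hle
  · -- forward in time
    have hder : ∀ (u' : ℝ → H),
        (∀ s ∈ Icc a b, HasDerivWithinAt u' (A s (u' s)) (Icc a b) s) →
        ∀ s ∈ Ico t₀ t', HasDerivWithinAt u' (v s (u' s)) (Ici s) s := by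
      intro u' hu' s hs
      have hsmem : s ∈ Icc a b := ⟨h.ht₀.1.trans hs.1, hs.2.le.trans ht'.2⟩
      have hco : ((h.pr s : ℝ)) = s := h.pr_of_mem hsmem
      show HasDerivWithinAt u' (A (h.pr s) (u' s)) (Ici s) s
      rw [hco]
      exact (hu' s hsmem).mono_of_mem_nhdsWithin
        (Icc_mem_nhdsGE_of_mem ⟨hsmem.1, hs.2.trans_le ht'.2⟩)
    have key := ODE_solution_unique_of_mem_Icc_right (v := v) (s := fun _ => univ) (fun s _ => hlip s)
      (hucont.mono (Icc_subset_Icc h.ht₀.1 ht'.2)) (hder u hu) (fun s _ => mem_univ _)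
      (hwcont.mono (Icc_subset_Icc h.ht₀.1 ht'.2)) (hder w hw) (fun s _ => mem_univ _) h0
    exact key ⟨hle, le_rfl⟩
  · -- backward in time
    have hder : ∀ (u' : ℝ → H),
        (∀ s ∈ Icc a b, HasDerivWithinAt u' (A s (u' s)) (Icc a b) s) →
        ∀ s ∈ Ioc t' t₀, HasDerivWithinAt u' (v s (u' s)) (Iic s) s := by
      intro u' hu' s hs
      have hsmem : s ∈ Icc a b := ⟨ht'.1.trans hs.1.le, hs.2.trans h.ht₀.2⟩
      have hco : ((h.pr s : ℝ)) = s := h.pr_of_mem hsmem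
      show HasDerivWithinAt u' (A (h.pr s) (u' s)) (Iic s) s
      rw [hco]
      exact (hu' s hsmem).mono_of_mem_nhdsWithin
        (Icc_mem_nhdsLE_of_mem ⟨ht'.1.trans_lt hs.1, hsmem.2⟩)
    have key := ODE_solution_unique_of_mem_Icc_left (v := v) (s := fun _ => univ) (fun s _ => hlip s)
      (hucont.mono (Icc_subset_Icc ht'.1 h.ht₀.2)) (hder u hu) (fun s _ => mem_univ _)
      (hwcont.mono (Icc_subset_Icc ht'.1 h.ht₀.2)) (hder w hw) (fun s _ => mem_univ _) h0
    exact key ⟨le_rfl, hle⟩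

end DysonHyp

end Core

/-- `V` is a strong solution of the initial value problem `V'(t) = A(t) V(t)`, `V t₀ = V₀`:
for every vector `ψ`, `t ↦ V t ψ` is differentiable (within `I`) with derivative
`A t (V t ψ)`. -/
def IsStrongSolution {H : Type*} [NormedAddCommGroup H] [InnerProductSpace ℂ H]
    (I : Set ℝ) (A : ℝ → H →L[ℂ] H) (t₀ : ℝ) (V₀ : H →L[ℂ] H)
    (V : ℝ → H →L[ℂ] H) : Prop :=
  V t₀ = V₀ ∧ ∀ ψ : H, ∀ t ∈ I, HasDerivWithinAt (fun s => V s ψ) (A t (V t ψ)) I t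

/-- Let `A : I → B(H)` be strongly continuous, `t₀ ∈ I`, `V₀ ∈ B(H)`.  Then
the initial value problem `V'(t) = A(t)V(t)`, `V(t₀) = V₀` has a unique strong solution
`V : I → B(H)`, and this solution is norm-continuous. -/
theorem exists_unique_strong_solution
    {H : Type*} [NormedAddCommGroup H] [InnerProductSpace ℂ H] [CompleteSpace H]
    (I : Set ℝ) (hI : I.OrdConnected) (t₀ : ℝ) (ht₀ : t₀ ∈ I)
    (A : ℝ → H →L[ℂ] H)
    (hA : ∀ ψ : H, ContinuousOn (fun t => A t ψ) I)
    (V₀ : H →L[ℂ] H) :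
    ∃ V : ℝ → H →L[ℂ] H, IsStrongSolution I A t₀ V₀ V ∧ ContinuousOn V I ∧
      ∀ W : ℝ → H →L[ℂ] H, IsStrongSolution I A t₀ V₀ W → Set.EqOn W V I := by
  classical
  have hyp : ∀ a b : ℝ, a ∈ I → b ∈ I → a ≤ t₀ → t₀ ≤ b → ∃ M, DysonHyp A a b t₀ M := by
    intro a b ha hb h1 h2
    have hsub : Set.Icc a b ⊆ I := hI.out ha hb
    have hA' : ∀ ψ : H, ContinuousOn (fun t => A t ψ) (Set.Icc a b) :=
      fun ψ => (hA ψ).mono hsub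
    obtain ⟨M, hM0, hM⟩ := exists_opNorm_bound hA'
    exact ⟨M, ⟨h1.trans h2, ⟨h1, h2⟩, hM0, hM, hA'⟩⟩
  have key : ∀ a b : ℝ, a ∈ I → b ∈ I → a ≤ t₀ → t₀ ≤ b →
      ∃ W : ℝ → H →L[ℂ] H, Continuous W ∧ W t₀ = V₀ ∧
        ∀ ψ : H, ∀ t ∈ Set.Icc a b,
          HasDerivWithinAt (fun s => W s ψ) (A t (W t ψ)) (Set.Icc a b) t := by
    intro a b ha hb h1 h2
    obtain ⟨M, hM⟩ := hyp a b ha hb h1 h2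
    exact hM.exists_sol V₀
  choose W hWc hW0 hWd using key
  have uniq : ∀ a b : ℝ, a ∈ I → b ∈ I → a ≤ t₀ → t₀ ≤ b → ∀ u w : ℝ → H,
      (∀ t ∈ Set.Icc a b, HasDerivWithinAt u (A t (u t)) (Set.Icc a b) t) →
      (∀ t ∈ Set.Icc a b, HasDerivWithinAt w (A t (w t)) (Set.Icc a b) t) →
      u t₀ = w t₀ → Set.EqOn u w (Set.Icc a b) := by
    intro a b ha hb h1 h2 u w hu hw h0
    obtain ⟨M, hM⟩ := hyp a b ha hb h1 h2
    exact hM.eqOn_of_sol hu hw h0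
  have hmin : ∀ {t : ℝ}, t ∈ I → min t t₀ ∈ I := by
    intro t ht; rcases min_cases t t₀ with ⟨h', _⟩ | ⟨h', _⟩ <;> rw [h'] <;> assumption
  have hmax : ∀ {t : ℝ}, t ∈ I → max t t₀ ∈ I := by
    intro t ht; rcases max_cases t t₀ with ⟨h', _⟩ | ⟨h', _⟩ <;> rw [h'] <;> assumption
  set V : ℝ → H →L[ℂ] H := fun t =>
    if ht : t ∈ I then
      W (min t t₀) (max t t₀) (hmin ht) (hmax ht) (min_le_right t t₀) (le_max_right t t₀) t
    else V₀ with hVdef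
  have hVeq : ∀ {t : ℝ} (ht : t ∈ I), V t =
      W (min t t₀) (max t t₀) (hmin ht) (hmax ht) (min_le_right t t₀) (le_max_right t t₀) t := by
    intro t ht
    simp only [hVdef]
    rw [dif_pos ht]
  -- coherence
  have hcoh : ∀ a b (ha : a ∈ I) (hb : b ∈ I) (h1 : a ≤ t₀) (h2 : t₀ ≤ b),
      ∀ t ∈ Set.Icc a b, ∀ (htI : t ∈ I), V t = W a b ha hb h1 h2 t := by
    intro a b ha hb h1 h2 t htab htI
    rw [hVeq htI]
    have hsub : Set.Icc (min t t₀) (max t t₀) ⊆ Set.Icc a b :=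
      Set.Icc_subset_Icc (le_min htab.1 h1) (max_le htab.2 h2)
    ext ψ
    refine uniq (min t t₀) (max t t₀) (hmin htI) (hmax htI) (min_le_right t t₀)
      (le_max_right t t₀) _ _ (fun s hs => hWd _ _ _ _ _ _ ψ s hs)
      (fun s hs => (hWd a b ha hb h1 h2 ψ s (hsub hs)).mono hsub) ?_
      ⟨min_le_left t t₀, le_max_left t t₀⟩
    rw [hW0, hW0]
  -- neighborhoods within I contained in compact subintervals
  have hnbhd : ∀ t ∈ I, ∃ a b, ∃ (ha : a ∈ I) (hb : b ∈ I) (h1 : a ≤ t₀) (h2 : t₀ ≤ b),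
      t ∈ Set.Icc a b ∧ Set.Icc a b ∈ nhdsWithin t I := by
    intro t ht
    obtain ⟨a, haI, ham, hlow⟩ : ∃ a, a ∈ I ∧ a ≤ min t t₀ ∧
        (a < t ∨ ∀ s ∈ I, a ≤ s) := by
      by_cases hex : ∃ s ∈ I, s < min t t₀
      · obtain ⟨s, hsI, hs⟩ := hex
        exact ⟨s, hsI, hs.le, Or.inl (hs.trans_le (min_le_left _ _))⟩
      · exact ⟨min t t₀, hmin ht, le_rfl,
          Or.inr fun s hs => le_of_not_gt fun hc => hex ⟨s, hs, hc⟩⟩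
    obtain ⟨b, hbI, hbm, hhigh⟩ : ∃ b, b ∈ I ∧ max t t₀ ≤ b ∧
        (t < b ∨ ∀ s ∈ I, s ≤ b) := by
      by_cases hex : ∃ s ∈ I, max t t₀ < s
      · obtain ⟨s, hsI, hs⟩ := hex
        exact ⟨s, hsI, hs.le, Or.inl ((le_max_left _ _).trans_lt hs)⟩
      · exact ⟨max t t₀, hmax ht, le_rfl,
          Or.inr fun s hs => le_of_not_gt fun hc => hex ⟨s, hs, hc⟩⟩
    have hat : a ≤ t := ham.trans (min_le_left _ _)
    have htb : t ≤ b := (le_max_left _ _).trans hbm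
    obtain ⟨p, hpt, hp⟩ : ∃ p, p < t ∧ ∀ s ∈ I, p < s → a ≤ s := by
      rcases hlow with hlt | hall
      · exact ⟨a, hlt, fun s _ hps => hps.le⟩
      · exact ⟨t - 1, by linarith, fun s hs _ => hall s hs⟩
    obtain ⟨q, htq, hq⟩ : ∃ q, t < q ∧ ∀ s ∈ I, s < q → s ≤ b := by
      rcases hhigh with hlt | hall
      · exact ⟨b, hlt, fun s _ hsq => hsq.le⟩
      · exact ⟨t + 1, by linarith, fun s hs _ => hall s hs⟩
    refine ⟨a, b, haI, hbI, ham.trans (min_le_right _ _), (le_max_right _ _).trans hbm,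
      ⟨hat, htb⟩, ?_⟩
    rw [mem_nhdsWithin]
    exact ⟨Set.Ioo p q, isOpen_Ioo, ⟨hpt, htq⟩,
      fun s hs => ⟨hp s hs.2 hs.1.1, hq s hs.2 hs.1.2⟩⟩
  refine ⟨V, ⟨by rw [hVeq ht₀, hW0], ?_⟩, ?_, ?_⟩
  · -- strong derivative
    intro ψ t ht
    obtain ⟨a, b, ha, hb, h1, h2, htab, hnb⟩ := hnbhd t ht
    have hVt : V t = W a b ha hb h1 h2 t := hcoh a b ha hb h1 h2 t htab ht
    have hd := hWd a b ha hb h1 h2 ψ t htab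
    have hmem : Set.Icc a b ∩ I ∈ nhdsWithin t I :=
      Filter.inter_mem hnb self_mem_nhdsWithin
    have hd2 : HasDerivWithinAt (fun s => V s ψ) (A t (W a b ha hb h1 h2 t ψ))
        (Set.Icc a b ∩ I) t :=
      (hd.mono Set.inter_subset_left).congr
        (fun s hs => by rw [hcoh a b ha hb h1 h2 s hs.1 hs.2]) (by rw [hVt])
    rw [hVt]
    exact hd2.mono_of_mem_nhdsWithin hmem
  · -- norm continuity
    intro t ht
    obtain ⟨a, b, ha, hb, h1, h2, htab, hnb⟩ := hnbhd t ht
    have hVt : V t = W a b ha hb h1 h2 t := hcoh a b ha hb h1 h2 t htab ht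
    have hmem : Set.Icc a b ∩ I ∈ nhdsWithin t I :=
      Filter.inter_mem hnb self_mem_nhdsWithin
    refine ContinuousWithinAt.congr_of_eventuallyEq
      ((hWc a b ha hb h1 h2).continuousWithinAt) ?_ hVt
    filter_upwards [hmem] with s hs
    exact hcoh a b ha hb h1 h2 s hs.1 hs.2
  · -- uniqueness
    intro U hU t ht
    have hsubI : Set.Icc (min t t₀) (max t t₀) ⊆ I := hI.out (hmin ht) (hmax ht)
    rw [hVeq ht]
    ext ψ
    refine uniq (min t t₀) (max t t₀) (hmin ht) (hmax ht) (min_le_right t t₀)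
      (le_max_right t t₀) (fun s => U s ψ) _
      (fun s hs => (hU.2 ψ s (hsubI hs)).mono hsubI)
      (fun s hs => hWd _ _ _ _ _ _ ψ s hs) ?_
      ⟨min_le_left t t₀, le_max_left t t₀⟩
    show (U t₀) ψ = _
    rw [hU.1, hW0]
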